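/- If the bipartite graph of the support of a matrix in 𝒞(P,Q) is a forest, then that matrix is the unique element of 𝒞(P,Q) with support contained in that forest's edge set; i.e., two elements of 𝒞(P,Q) whose supports are both contained in a common acyclic edge set are equal. -/

import Mathlib

open Finset Filter Topology

def IsProbVec {n : ℕ} (P : Fin n → ℝ) : Prop :=
  (∀ i, 0 ≤ P i) ∧ ∑ i, P i = 1

def supp {α : Type*} (P : α → ℝ) : Set α := {i | 0 < P i}

def supp2 {n m : ℕ} (S : Fin n → Fin m → ℝ) : Set (Fin n × Fin m) :=
  {p | 0 < S p.1 p.2}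

def Coupling {n m : ℕ} (P : Fin n → ℝ) (Q : Fin m → ℝ) : Set (Fin n → Fin m → ℝ) :=
  {S | (∀ i j, 0 ≤ S i j) ∧ (∀ i, ∑ j, S i j = P i) ∧ (∀ j, ∑ i, S i j = Q j)}

/-- Kullback-Leibler divergence of bivariate distributions, as a real-valued sum
(valid, with the convention `0 log 0 = 0`, whenever `supp2 T ⊆ supp2 S`). -/
noncomputable def D2 {n m : ℕ} (T S : Fin n → Fin m → ℝ) : ℝ :=
  ∑ i, ∑ j, T i j * Real.log (T i j / S i j)

/-- `T'` is an I-projection of `S` onto `𝒯`: it is absolutely continuous w.r.t. `S`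
(equivalently, `D(T'‖S) < ∞`) and minimizes the divergence among all such elements of `𝒯`
(elements with `¬ supp2 T ⊆ supp2 S` have infinite divergence). -/
def IsIProj {n m : ℕ} (S : Fin n → Fin m → ℝ) (𝒯 : Set (Fin n → Fin m → ℝ))
    (T' : Fin n → Fin m → ℝ) : Prop :=
  T' ∈ 𝒯 ∧ supp2 T' ⊆ supp2 S ∧ ∀ T ∈ 𝒯, supp2 T ⊆ supp2 S → D2 T' S ≤ D2 T S

noncomputable def prodDist {n m : ℕ} (P : Fin n → ℝ) (Q : Fin m → ℝ) :
    Fin n → Fin m → ℝ := fun i j => P i * Q j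

/-- KL divergence of univariate distributions. -/
noncomputable def Dv {n : ℕ} (P Q : Fin n → ℝ) : ℝ :=
  ∑ i, P i * Real.log (P i / Q i)

def GeomEquiv {n m : ℕ} (C1 C2 : Set (Fin n → Fin m → ℝ)) : Prop :=
  (∀ S ∈ C1, ∃ T ∈ C2, supp2 T = supp2 S) ∧ (∀ T ∈ C2, ∃ S ∈ C1, supp2 S = supp2 T)

/-- The bipartite graph on `Fin n ⊕ Fin m` with edge set `E ⊆ Fin n × Fin m`. -/
def bipGraph {n m : ℕ} (E : Set (Fin n × Fin m)) : SimpleGraph (Fin n ⊕ Fin m) where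
  Adj u v := ∃ i j, (i, j) ∈ E ∧
    ((u = Sum.inl i ∧ v = Sum.inr j) ∨ (u = Sum.inr j ∧ v = Sum.inl i))
  symm := by
    constructor
    rintro u v ⟨i, j, hE, h | h⟩
    · exact ⟨i, j, hE, Or.inr ⟨h.2, h.1⟩⟩
    · exact ⟨i, j, hE, Or.inl ⟨h.2, h.1⟩⟩
  loopless := by
    constructor
    rintro u ⟨i, j, hE, ⟨h1, h2⟩ | ⟨h1, h2⟩⟩ <;> simp_all


open SimpleGraph

lemma acyclic_no_deg2 {V : Type*} [Fintype V] [DecidableEq V] {G : SimpleGraph V}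
    (hG : G.IsAcyclic) (h2 : ∀ ⦃v w : V⦄, G.Adj v w → ∃ u, G.Adj w u ∧ u ≠ v) :
    ∀ v w : V, ¬ G.Adj v w := by
  intro v w hadj
  -- step function
  have hstep : ∀ p : V × V, G.Adj p.1 p.2 → ∃ u, G.Adj p.2 u ∧ u ≠ p.1 := fun p h => h2 h
  classical
  let step : V × V → V × V := fun p =>
    if h : G.Adj p.1 p.2 then (p.2, (h2 h).choose) else p
  let f : ℕ → V × V := fun k => step^[k] (v, w)
  have hf0 : f 0 = (v, w) := rfl
  have hfs : ∀ k, f (k + 1) = step (f k) := fun k => Function.iterate_succ_apply' step k _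
  have hadjf : ∀ k, G.Adj (f k).1 (f k).2 := by
    intro k
    induction k with
    | zero => exact hadj
    | succ k ih =>
      rw [hfs k]
      simp only [step, dif_pos ih]
      exact ((h2 ih).choose_spec).1
  have hfst : ∀ k, (f (k + 1)).1 = (f k).2 := by
    intro k; rw [hfs k]; simp only [step, dif_pos (hadjf k)]
  have hne : ∀ k, (f (k + 1)).2 ≠ (f k).1 := by
    intro k; rw [hfs k]; simp only [step, dif_pos (hadjf k)]
    exact ((h2 (hadjf k)).choose_spec).2
  -- walks
  have key : ∀ k : ℕ, ∃ p : G.Walk (f k).2 v, p.IsPath ∧ p.length = k + 1 ∧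
      ∃ (h : G.Adj (f k).2 (f k).1) (q : G.Walk (f k).1 v), p = Walk.cons h q := by
    intro k
    induction k with
    | zero =>
      refine ⟨Walk.cons hadj.symm Walk.nil, ?_, rfl, hadj.symm, Walk.nil, rfl⟩
      refine (Walk.cons_isPath_iff _ _).mpr ?_
      exact ⟨Walk.IsPath.nil, by simpa [hf0] using hadj.ne'⟩
    | succ k ih =>
      obtain ⟨p, hp, hlen, hk, q, hpq⟩ := ih
      have hadj' : G.Adj (f (k+1)).2 (f (k+1)).1 := (hadjf (k+1)).symm
      have hcast : (f (k+1)).1 = (f k).2 := hfst k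
      -- walk from (f (k+1)).1 to v is p, casted
      have p' : G.Walk (f (k+1)).1 v := p.copy hcast.symm rfl
      refine ⟨Walk.cons hadj' (p.copy hcast.symm rfl), ?_, by simp [hlen], hadj',
        p.copy hcast.symm rfl, rfl⟩
      rw [Walk.cons_isPath_iff]
      refine ⟨by simp [hp], fun hmem => ?_⟩
      rw [Walk.support_copy] at hmem
      -- u := (f (k+1)).2 ∈ p.support
      set u := (f (k+1)).2 with hu
      have hbu : G.Adj (f k).2 u := hcast ▸ hadjf (k + 1)
      have heq := hG.path_unique (Path.singleton hbu) ⟨p.takeUntil u hmem, hp.takeUntil hmem⟩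
      have hval : Walk.cons hbu Walk.nil = p.takeUntil u hmem := congrArg Subtype.val heq
      have hspec := p.take_spec hmem
      rw [← hval] at hspec
      simp only [Walk.cons_append, Walk.nil_append] at hspec
      have h2s : p.support = (f k).2 :: q.support := by rw [hpq, Walk.support_cons]
      have hsupp := congrArg Walk.support hspec
      rw [Walk.support_cons, h2s, (p.dropUntil u hmem).support_eq_cons,
        q.support_eq_cons] at hsupp
      have : u = (f k).1 := by
        injection hsupp with _ h2'
        injection h2'
      exact hne k this
  obtain ⟨p, hp, hlen, _⟩ := key (Fintype.card V)
  have := hp.length_lt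
  omega


theorem stmt9 {n m : ℕ} (P : Fin n → ℝ) (Q : Fin m → ℝ)
    (hP : IsProbVec P) (hQ : IsProbVec Q)
    (E : Set (Fin n × Fin m)) (hE : (bipGraph E).IsAcyclic)
    (S T : Fin n → Fin m → ℝ) (hS : S ∈ Coupling P Q) (hT : T ∈ Coupling P Q)
    (hSE : supp2 S ⊆ E) (hTE : supp2 T ⊆ E) : S = T := by
  classical
  obtain ⟨hS0, hSr, hSc⟩ := hS
  obtain ⟨hT0, hTr, hTc⟩ := hT
  set D : Fin n → Fin m → ℝ := fun i j => S i j - T i j with hD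
  have hrow : ∀ i, ∑ j, D i j = 0 := by
    intro i; simp [hD, Finset.sum_sub_distrib, hSr i, hTr i]
  have hcol : ∀ j, ∑ i, D i j = 0 := by
    intro j; simp [hD, Finset.sum_sub_distrib, hSc j, hTc j]
  set F : Set (Fin n × Fin m) := {p | D p.1 p.2 ≠ 0} with hF
  have hFE : F ⊆ E := by
    rintro ⟨i, j⟩ hij
    simp only [hF, Set.mem_setOf_eq, hD] at hij
    rcases lt_or_eq_of_le (hS0 i j) with h | h
    · exact hSE h
    · refine hTE ?_
      have : T i j ≠ 0 := by intro h'; exact hij (by rw [← h, h']; ring)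
      exact lt_of_le_of_ne (hT0 i j) (Ne.symm this)
  have hle : bipGraph F ≤ bipGraph E := by
    rintro u v ⟨i, j, hij, h⟩
    exact ⟨i, j, hFE hij, h⟩
  have hFacyclic : (bipGraph F).IsAcyclic := fun v c hc =>
    hE (c.mapLe hle) (hc.mapLe hle)
  -- the degree-2 property
  have hsum : ∀ {α : Type} [Fintype α] [DecidableEq α] (g : α → ℝ) (a : α),
      ∑ x, g x = 0 → g a ≠ 0 → ∃ b, g b ≠ 0 ∧ b ≠ a := by
    intro α _ _ g a hsum ha
    by_contra hcon
    push_neg at hcon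
    have : ∑ x, g x = g a := Finset.sum_eq_single_of_mem a (Finset.mem_univ a)
      (fun b _ hb => by by_contra h; exact hb (hcon b h))
    exact ha (this ▸ hsum)
  have h2 : ∀ ⦃x y : Fin n ⊕ Fin m⦄, (bipGraph F).Adj x y →
      ∃ u, (bipGraph F).Adj y u ∧ u ≠ x := by
    rintro x y ⟨i, j, hij, ⟨hx, hy⟩ | ⟨hx, hy⟩⟩
    · -- x = inl i, y = inr j : find another row i' with D i' j ≠ 0
      obtain ⟨i', hi', hne⟩ := hsum (fun i => D i j) i (hcol j) hij
      exact ⟨Sum.inl i', ⟨i', j, hi', Or.inr ⟨hy, rfl⟩⟩, by simp [hx, hne]⟩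
    · -- x = inr j, y = inl i : find another column
      obtain ⟨j', hj', hne⟩ := hsum (fun j => D i j) j (hrow i) hij
      exact ⟨Sum.inr j', ⟨i, j', hj', Or.inl ⟨hy, rfl⟩⟩, by simp [hx, hne]⟩
  have hnoadj := acyclic_no_deg2 hFacyclic h2
  funext i j
  by_contra hne
  have hDij : D i j ≠ 0 := sub_ne_zero_of_ne hne
  exact hnoadj (Sum.inl i) (Sum.inr j) ⟨i, j, hDij, Or.inl ⟨rfl, rfl⟩⟩
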